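/- Let O be a discrete valuation ring with uniformizer π and finite residue field of cardinality q, in which 2 ≠ 0, and write 2 = u·π^c with u a unit of O and c ≥ 0. Then for every a ∈ O and every integer s ≥ 1, the number of pairs (x, y) ∈ (O/π^s O)² satisfying x² + a·y² = 1 is at most 4·q^{c}·q^{s}. -/

import Mathlib

section AuxStmt16

variable {O : Type} [CommRing O] [IsDomain O] [IsDiscreteValuationRing O]
  [Finite (IsLocalRing.ResidueField O)] {π : O}

/-- Cardinality bound for quotients of a DVR by powers of the uniformizer. -/
lemma aux16_finite_card (hπ : Irreducible π) (n : ℕ) :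
    Finite (O ⧸ Ideal.span {π ^ n}) ∧
      Nat.card (O ⧸ Ideal.span {π ^ n}) ≤ Nat.card (IsLocalRing.ResidueField O) ^ n := by
  induction n with
  | zero =>
    have htop : Ideal.span {π ^ 0} = (⊤ : Ideal O) := by
      simp [Ideal.span_singleton_one]
    have hsub : Subsingleton (O ⧸ Ideal.span {π ^ 0}) := by
      rw [Ideal.Quotient.subsingleton_iff]; exact htop
    refine ⟨Finite.of_subsingleton, ?_⟩
    simpa using Finite.card_le_one_iff_subsingleton.mpr hsub
  | succ n ih =>
    obtain ⟨hfin, hcard⟩ := ih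
    haveI := hfin
    set k := IsLocalRing.ResidueField O
    let σn : (O ⧸ Ideal.span {π ^ n}) → O :=
      Function.surjInv Ideal.Quotient.mk_surjective
    let σk : k → O := Function.surjInv IsLocalRing.residue_surjective
    let f : k × (O ⧸ Ideal.span {π ^ n}) → O ⧸ Ideal.span {π ^ (n + 1)} :=
      fun p => Ideal.Quotient.mk _ (σn p.2 + π ^ n * σk p.1)
    have hf : Function.Surjective f := by
      intro ξ
      obtain ⟨x, rfl⟩ := Ideal.Quotient.mk_surjective ξ
      set y : O ⧸ Ideal.span {π ^ n} := Ideal.Quotient.mk _ x with hy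
      have h1 : π ^ n ∣ x - σn y := by
        rw [← Ideal.mem_span_singleton, ← Ideal.Quotient.eq_zero_iff_mem, map_sub]
        have : Ideal.Quotient.mk (Ideal.span {π ^ n}) (σn y) = y :=
          Function.surjInv_eq Ideal.Quotient.mk_surjective y
        rw [this, hy, sub_self]
      obtain ⟨r, hr⟩ := h1
      refine ⟨(IsLocalRing.residue O r, y), ?_⟩
      have h2 : π ∣ σk (IsLocalRing.residue O r) - r := by
        rw [← Ideal.mem_span_singleton, ← hπ.maximalIdeal_eq,
          ← Ideal.Quotient.eq_zero_iff_mem]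
        have : Ideal.Quotient.mk (IsLocalRing.maximalIdeal O)
            (σk (IsLocalRing.residue O r)) = IsLocalRing.residue O r :=
          Function.surjInv_eq IsLocalRing.residue_surjective _
        rw [map_sub, this]
        exact sub_self _
      obtain ⟨m, hm⟩ := h2
      show Ideal.Quotient.mk _ (σn y + π ^ n * σk (IsLocalRing.residue O r)) =
        Ideal.Quotient.mk _ x
      rw [Ideal.Quotient.eq, Ideal.mem_span_singleton]
      have hx : x = σn y + π ^ n * r := by
        have := hr; linear_combination this
      refine ⟨m, ?_⟩
      rw [hx]
      ring_nf
      linear_combination (π ^ n) * hm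
    haveI : Finite (O ⧸ Ideal.span {π ^ (n + 1)}) := Finite.of_surjective f hf
    refine ⟨this, ?_⟩
    calc Nat.card (O ⧸ Ideal.span {π ^ (n + 1)}) ≤
        Nat.card (k × (O ⧸ Ideal.span {π ^ n})) :=
          Nat.card_le_card_of_surjective f hf
      _ = Nat.card k * Nat.card (O ⧸ Ideal.span {π ^ n}) := Nat.card_prod _ _
      _ ≤ Nat.card k * Nat.card k ^ n := Nat.mul_le_mul_left _ hcard
      _ = Nat.card k ^ (n + 1) := by ring

/-- If `π^s ∣ d * e` and `π^(c+1) ∤ e` then `π^(s-c) ∣ d`. -/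
lemma aux16_key (hπ : Irreducible π) {s c : ℕ} {d e : O}
    (hde : π ^ s ∣ d * e) (he : ¬ π ^ (c + 1) ∣ e) : π ^ (s - c) ∣ d := by
  rcases le_or_gt s c with h | h
  · rw [Nat.sub_eq_zero_of_le h, pow_zero]; exact one_dvd d
  · have he0 : e ≠ 0 := fun h0 => he (h0 ▸ dvd_zero _)
    obtain ⟨j, v, rfl⟩ := IsDiscreteValuationRing.eq_unit_mul_pow_irreducible he0 hπ
    have hj : j ≤ c := by
      by_contra hj
      exact he (dvd_trans (pow_dvd_pow π (by omega)) (Dvd.intro_left _ rfl))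
    have hjs : j ≤ s := le_trans hj h.le
    have h1 : π ^ j * π ^ (s - j) ∣ π ^ j * (d * ↑v) := by
      rw [← pow_add, Nat.add_sub_cancel' hjs]
      have : d * (↑v * π ^ j) = π ^ j * (d * ↑v) := by ring
      rwa [this] at hde
    have h2 : π ^ (s - j) ∣ d * ↑v :=
      (mul_dvd_mul_iff_left (pow_ne_zero j hπ.ne_zero)).mp h1
    have h3 : π ^ (s - c) ∣ d * ↑v :=
      dvd_trans (pow_dvd_pow π (by omega)) h2
    exact (Units.dvd_mul_right).mp h3

/-- Two solutions of `A x² = A w²` are congruent mod `π^(s-c)` to `± w`. -/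
lemma aux16_disj (hπ : Irreducible π) {s c : ℕ} (u : Oˣ)
    (h2eq : (2 : O) = (u : O) * π ^ c) {A x w : O}
    (hA : ¬ π ∣ A) (hw : ¬ π ∣ w) (h : π ^ s ∣ A * (x ^ 2 - w ^ 2)) :
    π ^ (s - c) ∣ (x - w) ∨ π ^ (s - c) ∣ (x + w) := by
  have hprime : Prime π := hπ.prime
  have h1 : π ^ s ∣ (x - w) * (x + w) := by
    refine hprime.pow_dvd_of_dvd_mul_left s hA ?_
    have : A * (x ^ 2 - w ^ 2) = A * ((x - w) * (x + w)) := by ring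
    rwa [this] at h
  by_cases hc : π ^ (c + 1) ∣ (x + w)
  · -- then π^(c+1) ∤ (x - w)
    right
    have hd : ¬ π ^ (c + 1) ∣ (x - w) := by
      intro hd
      have hsub : (x + w) - (x - w) = π ^ c * ((u : O) * w) := by
        have h2w : (x + w) - (x - w) = 2 * w := by ring
        rw [h2w, h2eq]; ring
      have h2w : π ^ c * π ∣ π ^ c * ((u : O) * w) := by
        rw [← pow_succ, ← hsub]
        exact dvd_sub hc hd
      have : π ∣ (u : O) * w :=
        (mul_dvd_mul_iff_left (pow_ne_zero c hπ.ne_zero)).mp h2w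
      rcases hprime.dvd_or_dvd this with h' | h'
      · exact hπ.not_isUnit (isUnit_of_dvd_unit h' u.isUnit)
      · exact hw h'
    rw [mul_comm] at h1
    exact aux16_key hπ h1 hd
  · left
    exact aux16_key hπ h1 hc

/-- Easy direction: divisibility descends to the quotient. -/
lemma aux16_mk_dvd {s : ℕ} {m : ℕ} {x : O} (h : π ^ m ∣ x) :
    (Ideal.Quotient.mk (Ideal.span {π ^ s})) (π ^ m) ∣
      (Ideal.Quotient.mk (Ideal.span {π ^ s})) x := by
  obtain ⟨e, rfl⟩ := h
  exact ⟨Ideal.Quotient.mk _ e, by rw [map_mul]⟩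

/-- The set of multiples of `π^(s-c)` in `O/π^s` has at most `q^c` elements. -/
lemma aux16_T_card (hπ : Irreducible π) {s c : ℕ} :
    Nat.card {d : O ⧸ Ideal.span {π ^ s} //
        (Ideal.Quotient.mk (Ideal.span {π ^ s})) (π ^ (s - c)) ∣ d} ≤
      Nat.card (IsLocalRing.ResidueField O) ^ c := by
  haveI hRfin : Finite (O ⧸ Ideal.span {π ^ s}) := (aux16_finite_card hπ s).1
  have hq1 : 1 ≤ Nat.card (IsLocalRing.ResidueField O) := Nat.card_pos
  rcases le_or_gt s c with h | h
  · calc Nat.card {d : O ⧸ Ideal.span {π ^ s} //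
          (Ideal.Quotient.mk (Ideal.span {π ^ s})) (π ^ (s - c)) ∣ d}
        ≤ Nat.card (O ⧸ Ideal.span {π ^ s}) :=
          Nat.card_le_card_of_injective _ Subtype.val_injective
      _ ≤ Nat.card (IsLocalRing.ResidueField O) ^ s := (aux16_finite_card hπ s).2
      _ ≤ Nat.card (IsLocalRing.ResidueField O) ^ c := Nat.pow_le_pow_right hq1 h
  · haveI := (aux16_finite_card hπ c).1
    let g : {d : O ⧸ Ideal.span {π ^ s} //
        (Ideal.Quotient.mk (Ideal.span {π ^ s})) (π ^ (s - c)) ∣ d} →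
        O ⧸ Ideal.span {π ^ c} :=
      fun d => Ideal.Quotient.mk _
        (Function.surjInv Ideal.Quotient.mk_surjective d.2.choose)
    have hg : Function.Injective g := by
      intro d1 d2 hg12
      have hc1 : π ^ c ∣
          Function.surjInv Ideal.Quotient.mk_surjective d1.2.choose -
          Function.surjInv Ideal.Quotient.mk_surjective d2.2.choose := by
        rw [← Ideal.mem_span_singleton, ← Ideal.Quotient.eq]
        exact hg12
      obtain ⟨m, hm⟩ := hc1
      have hs1 : π ^ s ∣
          π ^ (s - c) * Function.surjInv Ideal.Quotient.mk_surjective d1.2.choose -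
          π ^ (s - c) * Function.surjInv Ideal.Quotient.mk_surjective d2.2.choose := by
        refine ⟨m, ?_⟩
        rw [← mul_sub, hm, ← mul_assoc, ← pow_add, Nat.sub_add_cancel h.le]
      have heq : (Ideal.Quotient.mk (Ideal.span {π ^ s}))
            (π ^ (s - c) * Function.surjInv Ideal.Quotient.mk_surjective d1.2.choose) =
          (Ideal.Quotient.mk (Ideal.span {π ^ s}))
            (π ^ (s - c) * Function.surjInv Ideal.Quotient.mk_surjective d2.2.choose) := by
        rw [Ideal.Quotient.eq, Ideal.mem_span_singleton]
        exact hs1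
      have hval : ∀ d : {d : O ⧸ Ideal.span {π ^ s} //
          (Ideal.Quotient.mk (Ideal.span {π ^ s})) (π ^ (s - c)) ∣ d},
          (Ideal.Quotient.mk (Ideal.span {π ^ s}))
            (π ^ (s - c) * Function.surjInv Ideal.Quotient.mk_surjective d.2.choose)
            = d.1 := by
        intro d
        rw [map_mul, Function.surjInv_eq Ideal.Quotient.mk_surjective d.2.choose]
        exact d.2.choose_spec.symm
      apply Subtype.ext
      rw [← hval d1, ← hval d2, heq]
    calc Nat.card {d : O ⧸ Ideal.span {π ^ s} //
          (Ideal.Quotient.mk (Ideal.span {π ^ s})) (π ^ (s - c)) ∣ d}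
        ≤ Nat.card (O ⧸ Ideal.span {π ^ c}) := Nat.card_le_card_of_injective g hg
      _ ≤ Nat.card (IsLocalRing.ResidueField O) ^ c := (aux16_finite_card hπ c).2

/-- Congruence disjunction at the level of the quotient ring. -/
lemma aux16_disjR (hπ : Irreducible π) (u : Oˣ) {s c : ℕ}
    (h2eq : (2 : O) = (u : O) * π ^ c)
    {A x w : O ⧸ Ideal.span {π ^ s}}
    (hA : ¬ (Ideal.Quotient.mk (Ideal.span {π ^ s})) π ∣ A)
    (hw : ¬ (Ideal.Quotient.mk (Ideal.span {π ^ s})) π ∣ w)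
    (h : A * x ^ 2 = A * w ^ 2) :
    (Ideal.Quotient.mk (Ideal.span {π ^ s})) (π ^ (s - c)) ∣ (x - w) ∨
      (Ideal.Quotient.mk (Ideal.span {π ^ s})) (π ^ (s - c)) ∣ (x + w) := by
  obtain ⟨At, hAt⟩ := Ideal.Quotient.mk_surjective A
  obtain ⟨xt, hxt⟩ := Ideal.Quotient.mk_surjective x
  obtain ⟨wt, hwt⟩ := Ideal.Quotient.mk_surjective w
  have hA' : ¬ π ∣ At := by
    intro ⟨e, he⟩
    exact hA ⟨Ideal.Quotient.mk _ e, by rw [← hAt, he, map_mul]⟩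
  have hw' : ¬ π ∣ wt := by
    intro ⟨e, he⟩
    exact hw ⟨Ideal.Quotient.mk _ e, by rw [← hwt, he, map_mul]⟩
  have hdvd : π ^ s ∣ At * (xt ^ 2 - wt ^ 2) := by
    rw [← Ideal.mem_span_singleton, ← Ideal.Quotient.eq_zero_iff_mem]
    have : (Ideal.Quotient.mk (Ideal.span {π ^ s})) (At * (xt ^ 2 - wt ^ 2)) =
        A * x ^ 2 - A * w ^ 2 := by
      push_cast [map_mul, map_sub, map_pow, hAt, hxt, hwt]
      ring
    rw [this, h, sub_self]
  rcases aux16_disj hπ u h2eq hA' hw' hdvd with h' | h'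
  · left
    have := aux16_mk_dvd (s := s) h'
    rwa [map_sub, hxt, hwt] at this
  · right
    have := aux16_mk_dvd (s := s) h'
    rwa [map_add, hxt, hwt] at this

end AuxStmt16

/-- Let `O` be a DVR with uniformizer `π` and finite residue field of cardinality `q`,
in which `2 ≠ 0`, and write `2 = u π^c` with `u` a unit. Then for every `a ∈ O` and
every `s ≥ 1`, the number of pairs `(x, y) ∈ (O/π^s O)²` with `x² + a y² = 1` is at
most `4 q^c q^s`. -/
theorem stmt_16 (O : Type) [CommRing O] [IsDomain O] [IsDiscreteValuationRing O]
    [Finite (IsLocalRing.ResidueField O)]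
    (π : O) (hπ : Irreducible π)
    (h2 : (2 : O) ≠ 0) (u : Oˣ) (c : ℕ) (h2eq : (2 : O) = (u : O) * π ^ c)
    (a : O) (s : ℕ) (hs : 1 ≤ s) :
    Nat.card {z : (O ⧸ Ideal.span {π ^ s}) × (O ⧸ Ideal.span {π ^ s}) //
        z.1 ^ 2 + (Ideal.Quotient.mk (Ideal.span {π ^ s}) a) * z.2 ^ 2 = 1} ≤
      4 * Nat.card (IsLocalRing.ResidueField O) ^ c *
        Nat.card (IsLocalRing.ResidueField O) ^ s := by
  classical
  haveI hRfin : Finite (O ⧸ Ideal.span {π ^ s}) := (aux16_finite_card hπ s).1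
  set R := O ⧸ Ideal.span {π ^ s} with hR
  set mks := Ideal.Quotient.mk (Ideal.span {π ^ s}) with hmks
  set q := Nat.card (IsLocalRing.ResidueField O) with hq
  -- π is not a unit mod π^s (since s ≥ 1)
  have hπ1 : ¬ mks π ∣ (1 : R) := by
    intro ⟨e, he⟩
    obtain ⟨et, het⟩ := Ideal.Quotient.mk_surjective e
    have : (1 : O) - π * et ∈ Ideal.span {π ^ s} := by
      rw [← Ideal.Quotient.eq]
      rw [map_mul, het]
      simpa using he
    rw [Ideal.mem_span_singleton] at this
    obtain ⟨m, hm⟩ := this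
    have : π ∣ 1 := by
      refine ⟨et + π ^ (s - 1) * m, ?_⟩
      have hss : π ^ s = π * π ^ (s - 1) := by
        rw [← pow_succ']
        congr 1
        omega
      rw [hss] at hm
      linear_combination hm
    exact hπ.not_isUnit (isUnit_of_dvd_one this)
  set T := {d : R // mks (π ^ (s - c)) ∣ d} with hT
  -- choice of a reference solution for each fiber
  let wx : R → R := fun y =>
    if h : ∃ x' : R, x' ^ 2 + mks a * y ^ 2 = 1 ∧ ¬ mks π ∣ x' then h.choose else 0
  let wy : R → R := fun x =>
    if h : ∃ y' : R, x ^ 2 + mks a * y' ^ 2 = 1 ∧ ¬ mks π ∣ y' then h.choose else 0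
  set S := {z : R × R // z.1 ^ 2 + mks a * z.2 ^ 2 = 1} with hS
  -- the injection
  have main : Nat.card S ≤ Nat.card ((R × Bool × T) ⊕ (R × Bool × T)) := by
    -- facts about the two branches
    have factx : ∀ z : S, ¬ mks π ∣ z.1.1 →
        mks (π ^ (s - c)) ∣ (z.1.1 - wx z.1.2) ∨
          mks (π ^ (s - c)) ∣ (z.1.1 + wx z.1.2) := by
      intro z hz
      have hex : ∃ x' : R, x' ^ 2 + mks a * z.1.2 ^ 2 = 1 ∧ ¬ mks π ∣ x' :=
        ⟨z.1.1, z.2, hz⟩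
      have hwxz : wx z.1.2 = hex.choose := dif_pos hex
      obtain ⟨hsol, hunit⟩ := hex.choose_spec
      have heq : (1 : R) * z.1.1 ^ 2 = 1 * hex.choose ^ 2 := by
        have := z.2
        linear_combination this - hsol
      rw [hwxz]
      exact aux16_disjR hπ u h2eq hπ1 hunit heq
    have facty : ∀ z : S, mks π ∣ z.1.1 →
        mks (π ^ (s - c)) ∣ (z.1.2 - wy z.1.1) ∨
          mks (π ^ (s - c)) ∣ (z.1.2 + wy z.1.1) := by
      intro z hz
      -- y itself is not divisible by π, nor is a
      have hay : ¬ mks π ∣ mks a * z.1.2 ^ 2 := by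
        intro hd
        apply hπ1
        have h1 : mks π ∣ z.1.1 ^ 2 := dvd_trans hz ⟨z.1.1, by ring⟩
        calc mks π ∣ z.1.1 ^ 2 + mks a * z.1.2 ^ 2 := dvd_add h1 hd
          _ = 1 := z.2
      have hzy : ¬ mks π ∣ z.1.2 := fun hd =>
        hay (dvd_trans hd ⟨mks a * z.1.2, by ring⟩)
      have hza : ¬ mks π ∣ mks a := fun hd =>
        hay (dvd_trans hd ⟨z.1.2 ^ 2, rfl⟩)
      have hex : ∃ y' : R, z.1.1 ^ 2 + mks a * y' ^ 2 = 1 ∧ ¬ mks π ∣ y' :=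
        ⟨z.1.2, z.2, hzy⟩
      have hwyz : wy z.1.1 = hex.choose := dif_pos hex
      obtain ⟨hsol, hunit⟩ := hex.choose_spec
      have heq : mks a * z.1.2 ^ 2 = mks a * hex.choose ^ 2 := by
        have := z.2
        linear_combination this - hsol
      rw [hwyz]
      exact aux16_disjR hπ u h2eq hza hunit heq
    let G : S → (R × Bool × T) ⊕ (R × Bool × T) := fun z =>
      if hz : mks π ∣ z.1.1 then
        Sum.inr (z.1.1,
          if hd : mks (π ^ (s - c)) ∣ (z.1.2 - wy z.1.1) then
            (true, ⟨z.1.2 - wy z.1.1, hd⟩)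
          else (false, ⟨z.1.2 + wy z.1.1, (facty z hz).resolve_left hd⟩))
      else
        Sum.inl (z.1.2,
          if hd : mks (π ^ (s - c)) ∣ (z.1.1 - wx z.1.2) then
            (true, ⟨z.1.1 - wx z.1.2, hd⟩)
          else (false, ⟨z.1.1 + wx z.1.2, (factx z hz).resolve_left hd⟩))
    have hG : Function.Injective G := by
      intro z1 z2 h12
      have hzeq : z1.1.1 = z2.1.1 → z1.1.2 = z2.1.2 → z1 = z2 := fun hx hy =>
        Subtype.ext (Prod.ext_iff.mpr ⟨hx, hy⟩)
      by_cases hz1 : mks π ∣ z1.1.1 <;> by_cases hz2 : mks π ∣ z2.1.1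
      · simp only [G, dif_pos hz1, dif_pos hz2, Sum.inr.injEq, Prod.mk.injEq] at h12
        obtain ⟨hfst, hsnd⟩ := h12
        have hw' : wy z1.1.1 = wy z2.1.1 := by rw [hfst]
        by_cases hd1 : mks (π ^ (s - c)) ∣ (z1.1.2 - wy z1.1.1)
        · rw [dif_pos hd1] at hsnd
          by_cases hd2 : mks (π ^ (s - c)) ∣ (z2.1.2 - wy z2.1.1)
          · rw [dif_pos hd2] at hsnd
            simp only [Prod.mk.injEq, true_and] at hsnd
            have hval : z1.1.2 - wy z1.1.1 = z2.1.2 - wy z2.1.1 :=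
              congrArg Subtype.val hsnd
            exact hzeq hfst (by linear_combination hval + hw')
          · rw [dif_neg hd2] at hsnd
            simp only [Prod.mk.injEq] at hsnd
            exact absurd hsnd.1 (by simp)
        · rw [dif_neg hd1] at hsnd
          by_cases hd2 : mks (π ^ (s - c)) ∣ (z2.1.2 - wy z2.1.1)
          · rw [dif_pos hd2] at hsnd
            simp only [Prod.mk.injEq] at hsnd
            exact absurd hsnd.1 (by simp)
          · rw [dif_neg hd2] at hsnd
            simp only [Prod.mk.injEq, true_and] at hsnd
            have hval : z1.1.2 + wy z1.1.1 = z2.1.2 + wy z2.1.1 :=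
              congrArg Subtype.val hsnd
            exact hzeq hfst (by linear_combination hval - hw')
      · simp [G, dif_pos hz1, dif_neg hz2] at h12
      · simp [G, dif_neg hz1, dif_pos hz2] at h12
      · simp only [G, dif_neg hz1, dif_neg hz2, Sum.inl.injEq, Prod.mk.injEq] at h12
        obtain ⟨hfst, hsnd⟩ := h12
        have hw' : wx z1.1.2 = wx z2.1.2 := by rw [hfst]
        by_cases hd1 : mks (π ^ (s - c)) ∣ (z1.1.1 - wx z1.1.2)
        · rw [dif_pos hd1] at hsnd
          by_cases hd2 : mks (π ^ (s - c)) ∣ (z2.1.1 - wx z2.1.2)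
          · rw [dif_pos hd2] at hsnd
            simp only [Prod.mk.injEq, true_and] at hsnd
            have hval : z1.1.1 - wx z1.1.2 = z2.1.1 - wx z2.1.2 :=
              congrArg Subtype.val hsnd
            exact hzeq (by linear_combination hval + hw') hfst
          · rw [dif_neg hd2] at hsnd
            simp only [Prod.mk.injEq] at hsnd
            exact absurd hsnd.1 (by simp)
        · rw [dif_neg hd1] at hsnd
          by_cases hd2 : mks (π ^ (s - c)) ∣ (z2.1.1 - wx z2.1.2)
          · rw [dif_pos hd2] at hsnd
            simp only [Prod.mk.injEq] at hsnd
            exact absurd hsnd.1 (by simp)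
          · rw [dif_neg hd2] at hsnd
            simp only [Prod.mk.injEq, true_and] at hsnd
            have hval : z1.1.1 + wx z1.1.2 = z2.1.1 + wx z2.1.2 :=
              congrArg Subtype.val hsnd
            exact hzeq (by linear_combination hval - hw') hfst
    exact Nat.card_le_card_of_injective G hG
  have hTcard : Nat.card T ≤ q ^ c := aux16_T_card hπ
  have hRcard : Nat.card R ≤ q ^ s := (aux16_finite_card hπ s).2
  have hbool : Nat.card Bool = 2 := by simp
  calc Nat.card S ≤ Nat.card ((R × Bool × T) ⊕ (R × Bool × T)) := main
    _ = 2 * (Nat.card R * (2 * Nat.card T)) := by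
        rw [Nat.card_sum, Nat.card_prod, Nat.card_prod, hbool]; ring
    _ ≤ 2 * (q ^ s * (2 * q ^ c)) := by
        apply Nat.mul_le_mul_left
        exact Nat.mul_le_mul hRcard (Nat.mul_le_mul_left _ hTcard)
    _ = 4 * q ^ c * q ^ s := by ring
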